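/- Let f : ℝ → ℝ be lower semi-continuous and let f^c denote its convex hull (the largest convex function below f). If f > f^c on an open interval (a,b), then f^c is linear (affine) on (a,b). -/

import Mathlib

open MeasureTheory Set Filter

noncomputable def pot (eta : Measure ℝ) (k : ℝ) : ℝ := ∫ x, max (k - x) 0 ∂eta

noncomputable def cpot (eta : Measure ℝ) (k : ℝ) : ℝ := ∫ x, max (x - k) 0 ∂eta

/-- `c` is the convex hull (largest convex minorant) of `f`. -/
def IsConvexHull (f c : ℝ → ℝ) : Prop :=
  ConvexOn ℝ Set.univ c ∧ (∀ x, c x ≤ f x) ∧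
    ∀ g : ℝ → ℝ, ConvexOn ℝ Set.univ g → (∀ x, g x ≤ f x) → ∀ x, g x ≤ c x

/-- Convex order: `∫ f dη ≤ ∫ f dχ` for all convex `f` for which both integrals exist. -/
def Cx (eta chi : Measure ℝ) : Prop :=
  ∀ f : ℝ → ℝ, ConvexOn ℝ Set.univ f → Integrable f eta → Integrable f chi →
    ∫ x, f x ∂eta ≤ ∫ x, f x ∂chi

/-- Extended convex order: `∫ f dη ≤ ∫ f dχ` for all nonnegative convex `f`. -/
def ECx (eta chi : Measure ℝ) : Prop :=
  ∀ f : ℝ → ℝ, ConvexOn ℝ Set.univ f → (∀ x, 0 ≤ f x) →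
    ∫⁻ x, ENNReal.ofReal (f x) ∂eta ≤ ∫⁻ x, ENNReal.ofReal (f x) ∂chi

/-- The class `𝒟(a, b)`: nonnegative, nondecreasing, convex functions vanishing at `-∞`
and asymptotic to `a * z - b` at `+∞`. -/
def MemD (a b : ℝ) (f : ℝ → ℝ) : Prop :=
  ConvexOn ℝ Set.univ f ∧ Monotone f ∧ (∀ x, 0 ≤ f x) ∧
    Tendsto f atBot (nhds 0) ∧
    Tendsto (fun z => f z - (a * z - b)) atTop (nhds 0)

/-- `S` is the shadow of `μ` in `ν`. -/
def IsShadow (mu nu S : Measure ℝ) : Prop :=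
  Cx mu S ∧ S ≤ nu ∧ ∀ eta : Measure ℝ, Cx mu eta → eta ≤ nu → Cx S eta

/-- `T` is the counter-shadow of `μ` in `ν`. -/
def IsCounterShadow (mu nu T : Measure ℝ) : Prop :=
  Cx mu T ∧ T ≤ nu ∧ ∀ eta : Measure ℝ, Cx mu eta → eta ≤ nu → Cx eta T

lemma lsc_pos_lb {g : ℝ → ℝ} (hg : LowerSemicontinuous g) {K : Set ℝ} (hK : IsCompact K)
    (hne : K.Nonempty) (hpos : ∀ x ∈ K, 0 < g x) : ∃ ε > 0, ∀ x ∈ K, ε ≤ g x := by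
  obtain ⟨t, htK, hcov⟩ := hK.elim_nhds_subcover (fun x => {z | g x / 2 < g z})
    (fun x hx => hg x (g x / 2) (by linarith [hpos x hx]))
  obtain ⟨x₀, hx₀⟩ := hne
  have hx₀' := hcov hx₀
  simp only [mem_iUnion, mem_setOf_eq, exists_prop] at hx₀'
  obtain ⟨y, hyt, -⟩ := hx₀'
  have htne : t.Nonempty := ⟨y, hyt⟩
  refine ⟨t.inf' htne (fun x => g x / 2), ?_, ?_⟩
  · rw [gt_iff_lt, Finset.lt_inf'_iff]
    exact fun x hx => by linarith [hpos x (htK x hx)]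
  · intro x hx
    have h := hcov hx
    simp only [mem_iUnion, mem_setOf_eq, exists_prop] at h
    obtain ⟨z, hzt, hz⟩ := h
    exact (Finset.inf'_le _ hzt).trans hz.le

lemma chord_le {c : ℝ → ℝ} (hcx : ConvexOn ℝ (Set.univ) c) {u v x : ℝ} (huv : u < v)
    (hux : u ≤ x) (hxv : x ≤ v) :
    c x * (v - u) ≤ c u * (v - x) + c v * (x - u) := by
  have hvu : (0:ℝ) < v - u := by linarith
  have h := hcx.2 (mem_univ u) (mem_univ v)
    (div_nonneg (by linarith : (0:ℝ) ≤ v - x) hvu.le)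
    (div_nonneg (by linarith : (0:ℝ) ≤ x - u) hvu.le)
    (by field_simp; ring)
  have hx : ((v-x)/(v-u)) • u + ((x-u)/(v-u)) • v = x := by
    simp only [smul_eq_mul]; field_simp; ring
  rw [hx] at h
  have h2 : ((v-x)/(v-u) * c u + (x-u)/(v-u) * c v) * (v-u)
      = c u * (v-x) + c v * (x-u) := by field_simp
  simp only [smul_eq_mul] at h
  calc c x * (v - u) ≤ ((v-x)/(v-u) * c u + (x-u)/(v-u) * c v) * (v-u) :=
        mul_le_mul_of_nonneg_right h hvu.le
    _ = c u * (v - x) + c v * (x - u) := h2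

lemma key_eq (f c : ℝ → ℝ) (hf : LowerSemicontinuous f) (hc : IsConvexHull f c)
    {a b u w v : ℝ} (hau : a < u) (huw : u < w) (hwv : w < v) (hvb : v < b)
    (hgt : ∀ x ∈ Ioo a b, c x < f x) :
    c w * (v - u) = c u * (v - w) + c v * (w - u) := by
  obtain ⟨hcvx, hcf, hmax⟩ := hc
  refine le_antisymm (chord_le hcvx (by linarith) huw.le hwv.le) ?_
  by_contra hlt
  push_neg at hlt
  have hvu : (0:ℝ) < v - u := by linarith
  have hcont : Continuous c := hcvx.locallyLipschitz.continuous
  have hlsc : LowerSemicontinuous (fun x => f x - c x) := by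
    simpa [sub_eq_add_neg] using hf.add hcont.neg.lowerSemicontinuous
  obtain ⟨ε, hε, hεle⟩ := lsc_pos_lb hlsc isCompact_Icc
    (Set.nonempty_Icc.2 (by linarith : u ≤ v))
    (fun x hx => sub_pos.2 (hgt x ⟨by linarith [hx.1], by linarith [hx.2]⟩))
  obtain ⟨s, hs⟩ : ∃ s : ℝ, s = (c v - c u) / (v - u) := ⟨_, rfl⟩
  have hsmul : s * (v - u) = c v - c u := by rw [hs]; field_simp
  -- the function φ = (line through (u, c u), (v, c v)) - c
  have hφc : Continuous (fun x => c u + s * (x - u) - c x) := by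
    apply Continuous.sub _ hcont; continuity
  have hφw : 0 < c u + s * (w - u) - c w := by
    have h4 : 0 < (c u + s * (w - u) - c w) * (v - u) := by nlinarith [hsmul, hlt]
    nlinarith [h4]
  obtain ⟨w', hw'mem, hw'max⟩ := isCompact_Icc.exists_isMaxOn
    (Set.nonempty_Icc.2 (by linarith : u ≤ v)) hφc.continuousOn
  obtain ⟨M, hM⟩ : ∃ M : ℝ, M = c u + s * (w' - u) - c w' := ⟨_, rfl⟩
  have hw'max' : ∀ x ∈ Icc u v, c u + s * (x - u) - c x ≤ M := by
    intro x hx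
    have := hw'max hx
    simpa [hM] using this
  have hMpos : 0 < M := lt_of_lt_of_le hφw (hw'max' w ⟨huw.le, hwv.le⟩)
  obtain ⟨t, ht⟩ : ∃ t : ℝ, t = M - min ε M / 2 := ⟨_, rfl⟩
  have htpos : 0 < t := by
    have := min_le_right ε M
    rw [ht]; linarith
  have htM : t < M := by
    have h1 := lt_min hε hMpos
    rw [ht]; linarith
  -- the affine function L = line - t is ≤ f everywhere
  have hLf : ∀ x, c u + s * (x - u) - t ≤ f x := by
    intro x
    rcases le_or_gt u x with hux | hxu
    · rcases le_or_gt x v with hxv | hvx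
      · -- x ∈ Icc u v
        have h1 := hw'max' x ⟨hux, hxv⟩
        have h2 : ε ≤ f x - c x := hεle x ⟨hux, hxv⟩
        have h3 : min ε M ≤ ε := min_le_left ε M
        rw [ht]; linarith
      · -- v < x
        have h2 : c v * (x - u) ≤ c u * (x - v) + c x * (v - u) :=
          chord_le hcvx (by linarith : u < x) (by linarith) hvx.le
        have h4 : c u + s * (x - u) ≤ c x := by nlinarith [hsmul, h2, hvu]
        have := hcf x
        linarith
    · -- x < u
      have h2 : c u * (v - x) ≤ c x * (v - u) + c v * (u - x) :=
        chord_le hcvx (by linarith : x < v) hxu.le (by linarith)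
      have h4 : c u + s * (x - u) ≤ c x := by nlinarith [hsmul, h2, hvu]
      have := hcf x
      linarith
  -- L is affine hence convex
  have hLcvx : ConvexOn ℝ Set.univ (fun x => c u + s * (x - u) - t) := by
    refine ⟨convex_univ, fun x _ y _ p q hp hq hpq => le_of_eq ?_⟩
    simp only [smul_eq_mul]
    ring_nf
    linear_combination (c u - s * u - t) * hpq.symm
  have hgcvx : ConvexOn ℝ Set.univ (fun x => max (c x) (c u + s * (x - u) - t)) :=
    hcvx.sup hLcvx
  have hgf : ∀ x, max (c x) (c u + s * (x - u) - t) ≤ f x :=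
    fun x => max_le (hcf x) (hLf x)
  have hcontra := hmax _ hgcvx hgf w'
  have h5 : c u + s * (w' - u) - t ≤ max (c w') (c u + s * (w' - u) - t) :=
    le_max_right _ _
  have h6 : max (c w') (c u + s * (w' - u) - t) ≤ c w' := hcontra
  have h7 : min ε M > 0 := lt_min hε hMpos
  linarith [hM, h5.trans h6, h7, ht]

theorem stmt0 (f c : ℝ → ℝ) (hf : LowerSemicontinuous f)
    (hc : IsConvexHull f c) (a b : ℝ)
    (hgt : ∀ x ∈ Ioo a b, c x < f x) :
    ∃ m q : ℝ, ∀ x ∈ Ioo a b, c x = m * x + q := by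
  rcases le_or_gt b a with hba | hab
  · exact ⟨0, 0, fun x hx => absurd (hx.1.trans hx.2) (by linarith)⟩
  set p : ℝ := a + (b - a) / 3 with hp
  set q : ℝ := a + 2 * (b - a) / 3 with hq
  have hap : a < p := by rw [hp]; linarith
  have hpq : p < q := by rw [hp, hq]; linarith
  have hqb : q < b := by rw [hq]; linarith
  have hqp : (0:ℝ) < q - p := by linarith
  refine ⟨(c q - c p) / (q - p), c p - (c q - c p) / (q - p) * p, ?_⟩
  intro x hx
  obtain ⟨hax, hxb⟩ := hx
  have main : c x * (q - p) = c p * (q - x) + c q * (x - p) := by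
    rcases lt_trichotomy x p with hxp | hxp | hxp
    · have h := key_eq f c hf hc hax hxp hpq hqb hgt
      linarith
    · subst hxp; ring
    · rcases lt_trichotomy x q with hxq | hxq | hxq
      · have h := key_eq f c hf hc hap hxp hxq hqb hgt
        linarith
      · subst hxq; ring
      · have h := key_eq f c hf hc hap hpq hxq hxb hgt
        linarith
  have hne : q - p ≠ 0 := ne_of_gt hqp
  field_simp
  linear_combination main
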